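/- Let m, T be natural numbers with T ≥ 1, α > 0 and R reals. Let θ : Fin T → Fin m → ℝ with θ(t,j) ≥ 0 for all t, j; let F : (Fin m → ℝ) → ℝ; let x : Fin T → Fin m → ℝ with 0 ≤ x(t,j) ≤ 1; let y : Fin T → Fin m → ℝ with 0 ≤ y(t,j) ≤ x(t,j); and let v : Finset (Fin m) → ℝ. Assume: (regret) for every z : Fin m → ℝ with 0 ≤ z(j) ≤ 1 for all j, (1/T)·∑_{t} [(F(z) − ∑_j θ(t,j)·z(j)) − (F(x(t)) − ∑_j θ(t,j)·x(t,j))] ≤ R; and (approximation) for every S : Finset (Fin m), F(1_S) ≥ v(S)/α, where 1_S is the indicator vector of S. Then for every S : Finset (Fin m), (1/T)·∑_{t} (F(x(t)) − ∑_j θ(t,j)·y(t,j)) ≥ v(S)/α − ∑_{j ∈ S} ((1/T)·∑_t θ(t,j)) − R. -/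

import Mathlib

/-- **From online convex optimization with a convex rounding scheme to approximate no-envy.**
If `x t` is the iterate of an online algorithm with regret `R` for the payoffs
`z ↦ F z − ⟨θ t, z⟩` over the cube `[0,1]^m`, the rounding marginals `y t` are dominated
coordinatewise by `x t`, and `F` α-approximates the valuation `v` at integral points, then the
average expected buyer utility is at least `(1/α)·v S` minus the average price of `S`,
minus `R`, for every bundle `S`. -/
theorem convex_rounding_no_envy (m T : ℕ) (hT : 1 ≤ T) (α R : ℝ) (hα : 0 < α)
    (θ : Fin T → Fin m → ℝ) (hθ : ∀ t j, 0 ≤ θ t j)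
    (F : (Fin m → ℝ) → ℝ)
    (x : Fin T → Fin m → ℝ) (hx : ∀ t j, 0 ≤ x t j ∧ x t j ≤ 1)
    (y : Fin T → Fin m → ℝ) (hy : ∀ t j, 0 ≤ y t j ∧ y t j ≤ x t j)
    (v : Finset (Fin m) → ℝ)
    (hreg : ∀ z : Fin m → ℝ, (∀ j, 0 ≤ z j ∧ z j ≤ 1) →
      (1 / (T : ℝ)) * ∑ t : Fin T,
        ((F z - ∑ j : Fin m, θ t j * z j) - (F (x t) - ∑ j : Fin m, θ t j * x t j)) ≤ R)
    (happx : ∀ S : Finset (Fin m), F (fun j => if j ∈ S then 1 else 0) ≥ v S / α) :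
    ∀ S : Finset (Fin m),
      (1 / (T : ℝ)) * ∑ t : Fin T, (F (x t) - ∑ j : Fin m, θ t j * y t j)
        ≥ v S / α - ∑ j ∈ S, ((1 / (T : ℝ)) * ∑ t : Fin T, θ t j) - R := by
  intro S
  have hT' : (0:ℝ) < T := by exact_mod_cast Nat.lt_of_lt_of_le Nat.zero_lt_one hT
  set z : Fin m → ℝ := fun j => if j ∈ S then 1 else 0 with hzdef
  have hz : ∀ j, 0 ≤ z j ∧ z j ≤ 1 := by
    intro j; simp only [hzdef]; split <;> norm_num
  have h1 := hreg z hz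
  have hpz : ∀ t : Fin T, ∑ j : Fin m, θ t j * z j = ∑ j ∈ S, θ t j := by
    intro t
    simp [hzdef, mul_ite, ← Finset.sum_filter, Finset.filter_mem_eq_inter]
  -- rewrite regret sum
  have hsum : ∑ t : Fin T, ((F z - ∑ j : Fin m, θ t j * z j)
      - (F (x t) - ∑ j : Fin m, θ t j * x t j))
      = (T : ℝ) * F z - ∑ t : Fin T, ∑ j ∈ S, θ t j
        - ∑ t : Fin T, (F (x t) - ∑ j : Fin m, θ t j * x t j) := by
    rw [Finset.sum_sub_distrib, Finset.sum_sub_distrib]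
    simp [hpz, mul_comm]
  rw [hsum] at h1
  have key : F z - (1 / (T : ℝ)) * ∑ t : Fin T, ∑ j ∈ S, θ t j - R
      ≤ (1 / (T : ℝ)) * ∑ t : Fin T, (F (x t) - ∑ j : Fin m, θ t j * x t j) := by
    have h2 : (1 / (T : ℝ)) * ((T : ℝ) * F z - ∑ t : Fin T, ∑ j ∈ S, θ t j
        - ∑ t : Fin T, (F (x t) - ∑ j : Fin m, θ t j * x t j)) ≤ R := h1
    have h4 : (1 / (T : ℝ)) * ((T : ℝ) * F z) = F z := by field_simp
    rw [mul_sub, mul_sub, h4] at h2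
    linarith
  have hswap : ∑ j ∈ S, ((1 / (T : ℝ)) * ∑ t : Fin T, θ t j)
      = (1 / (T : ℝ)) * ∑ t : Fin T, ∑ j ∈ S, θ t j := by
    rw [← Finset.mul_sum, Finset.sum_comm]
  have hdom : ∑ t : Fin T, (F (x t) - ∑ j : Fin m, θ t j * x t j)
      ≤ ∑ t : Fin T, (F (x t) - ∑ j : Fin m, θ t j * y t j) := by
    apply Finset.sum_le_sum
    intro t _
    have : ∑ j : Fin m, θ t j * y t j ≤ ∑ j : Fin m, θ t j * x t j := by
      apply Finset.sum_le_sum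
      intro j _
      exact mul_le_mul_of_nonneg_left (hy t j).2 (hθ t j)
    linarith
  have hF := happx S
  have hdom' : (1 / (T : ℝ)) * ∑ t : Fin T, (F (x t) - ∑ j : Fin m, θ t j * x t j)
      ≤ (1 / (T : ℝ)) * ∑ t : Fin T, (F (x t) - ∑ j : Fin m, θ t j * y t j) :=
    mul_le_mul_of_nonneg_left hdom (by positivity)
  rw [hswap]
  have : v S / α ≤ F z := hF
  linarith
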